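/- In W(Ã_2), for every k ≥ 0, the word (σ_2σ_1a_3)^k σ_2 σ_1 is a reduced expression and the element it represents is fully commutative. -/

import Mathlib

open CoxeterSystem

/-- The Coxeter matrix of affine type Ãₙ: generators indexed by `Fin (n+1)` arranged in a
cycle (index `k` is `σ_{k+1}` for `k < n`, and index `n` is `a_{n+1}`); cyclically adjacent
generators braid with order 3, and all other pairs commute. -/
def affineAMatrix (n : ℕ) : CoxeterMatrix (Fin (n + 1)) where
  M := Matrix.of fun i j : Fin (n + 1) =>
    if i = j then 1 else if i - j = 1 ∨ j - i = 1 then 3 else 2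
  isSymm := by
    unfold Matrix.IsSymm
    ext i j
    simp only [Matrix.transpose_apply, Matrix.of_apply]
    by_cases h : i = j
    · simp [h]
    · simp [h, Ne.symm h, or_comm]
  diagonal := by simp
  off_diagonal := by aesop

def CommMove {B : Type*} (M : CoxeterMatrix B) (ω₁ ω₂ : List B) : Prop :=
  ∃ (l r : List B) (s t : B), M s t = 2 ∧ ω₁ = l ++ s :: t :: r ∧ ω₂ = l ++ t :: s :: r

def CommEquiv {B : Type*} (M : CoxeterMatrix B) : List B → List B → Prop :=
  Relation.ReflTransGen (CommMove M)

def IsRedexOf {B W : Type*} [Group W] {M : CoxeterMatrix B} (cs : CoxeterSystem M W)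
    (ω : List B) (w : W) : Prop :=
  cs.wordProd ω = w ∧ cs.IsReduced ω

def IsFC {B W : Type*} [Group W] {M : CoxeterMatrix B} (cs : CoxeterSystem M W) (w : W) : Prop :=
  ∀ ω₁ ω₂, IsRedexOf cs ω₁ w → IsRedexOf cs ω₂ w → CommEquiv M ω₁ ω₂

/-- The decreasing word `[i, i-1, ..., j]` of (1-based) generator subscripts. -/
def decW (i j : ℕ) : List ℕ := (List.range' j (i + 1 - j)).reverse

/-- The increasing word `[i, i+1, ..., j]` of (1-based) generator subscripts. -/
def incW (i j : ℕ) : List ℕ := List.range' i (j + 1 - i)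


namespace AffA2Aux

abbrev P2 := ℤ × ℤ

def NN (p : P2) : ℕ := (p.1/3).natAbs + (p.2/3).natAbs + ((p.1+p.2)/3).natAbs

def Pmat (a b c d : ℤ) : Prop :=
  (a=1∧b=0∧c=0∧d=1) ∨ (a=-1∧b=0∧c=1∧d=1) ∨ (a=1∧b=1∧c=0∧d=-1) ∨
  (a=0∧b=-1∧c=-1∧d=0) ∨ (a=-1∧b=-1∧c=1∧d=0) ∨ (a=0∧b=1∧c=-1∧d=-1)

lemma pm0 {a b c d : ℤ} (h : Pmat a b c d) : Pmat (-a+b) b (-c+d) d := by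
  rcases h with ⟨rfl,rfl,rfl,rfl⟩|⟨rfl,rfl,rfl,rfl⟩|⟨rfl,rfl,rfl,rfl⟩|⟨rfl,rfl,rfl,rfl⟩|⟨rfl,rfl,rfl,rfl⟩|⟨rfl,rfl,rfl,rfl⟩ <;> norm_num [Pmat]

lemma pm1 {a b c d : ℤ} (h : Pmat a b c d) : Pmat a (a-b) c (c-d) := by
  rcases h with ⟨rfl,rfl,rfl,rfl⟩|⟨rfl,rfl,rfl,rfl⟩|⟨rfl,rfl,rfl,rfl⟩|⟨rfl,rfl,rfl,rfl⟩|⟨rfl,rfl,rfl,rfl⟩|⟨rfl,rfl,rfl,rfl⟩ <;> norm_num [Pmat]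

lemma pm2 {a b c d : ℤ} (h : Pmat a b c d) : Pmat (-b) (-a) (-d) (-c) := by
  rcases h with ⟨rfl,rfl,rfl,rfl⟩|⟨rfl,rfl,rfl,rfl⟩|⟨rfl,rfl,rfl,rfl⟩|⟨rfl,rfl,rfl,rfl⟩|⟨rfl,rfl,rfl,rfl⟩|⟨rfl,rfl,rfl,rfl⟩ <;> norm_num [Pmat]

def f0 : P2 → P2 := fun p => (-p.1, p.1+p.2)
def f1 : P2 → P2 := fun p => (p.1+p.2, -p.2)
def f2 : P2 → P2 := fun p => (3-p.2, 3-p.1)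
def ff (i : Fin 3) : P2 → P2 := if i.val = 0 then f0 else if i.val = 1 then f1 else f2

lemma ff0 : ff 0 = f0 := rfl
lemma ff1 : ff 1 = f1 := rfl
lemma ff2 : ff 2 = f2 := rfl

def Good (g : P2 → P2) : Prop :=
  ∃ a b c d t1 t2 : ℤ, Pmat a b c d ∧ ∀ x y : ℤ, g (x,y) = (a*x+b*y+3*t1, c*x+d*y+3*t2)

lemma good_id : Good id := ⟨1,0,0,1,0,0, Or.inl ⟨rfl,rfl,rfl,rfl⟩, fun x y => by norm_num⟩

lemma key {g : P2 → P2} {a b c d t1 t2 : ℤ}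
    (h : ∀ x y : ℤ, g (x,y) = (a*x+b*y+3*t1, c*x+d*y+3*t2)) (q : P2) :
    g q = (a*q.1+b*q.2+3*t1, c*q.1+d*q.2+3*t2) := by
  rw [← h q.1 q.2]

lemma good_step {g : P2 → P2} (hg : Good g) (i : Fin 3) : Good (fun p => g (ff i p)) := by
  obtain ⟨a,b,c,d,t1,t2,hm,h⟩ := hg
  have hi : i = 0 ∨ i = 1 ∨ i = 2 := by fin_cases i <;> decide
  rcases hi with rfl|rfl|rfl
  · exact ⟨-a+b, b, -c+d, d, t1, t2, pm0 hm, fun x y => by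
      rw [ff0]; show g (f0 (x,y)) = _
      rw [show f0 (x,y) = (-x, x+y) from rfl, h]
      simp only [Prod.mk.injEq]; constructor <;> ring⟩
  · exact ⟨a, a-b, c, c-d, t1, t2, pm1 hm, fun x y => by
      rw [ff1]; show g (f1 (x,y)) = _
      rw [show f1 (x,y) = (x+y, -y) from rfl, h]
      simp only [Prod.mk.injEq]; constructor <;> ring⟩
  · exact ⟨-b, -a, -d, -c, t1+a+b, t2+c+d, pm2 hm, fun x y => by
      rw [ff2]; show g (f2 (x,y)) = _
      rw [show f2 (x,y) = (3-y, 3-x) from rfl, h]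
      simp only [Prod.mk.injEq]; constructor <;> ring⟩

set_option maxHeartbeats 1000000 in
lemma NN_step {g : P2 → P2} (hg : Good g) (i : Fin 3) :
    NN (g (ff i ((1:ℤ),(1:ℤ)))) ≤ NN (g ((1:ℤ),(1:ℤ))) + 1 := by
  obtain ⟨a,b,c,d,t1,t2,hm,h⟩ := hg
  have hi : i = 0 ∨ i = 1 ∨ i = 2 := by fin_cases i <;> decide
  rcases hi with rfl|rfl|rfl <;>
    [rw [ff0, show f0 ((1:ℤ),(1:ℤ)) = ((-1:ℤ),(2:ℤ)) from rfl];
     rw [ff1, show f1 ((1:ℤ),(1:ℤ)) = ((2:ℤ),(-1:ℤ)) from rfl];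
     rw [ff2, show f2 ((1:ℤ),(1:ℤ)) = ((2:ℤ),(2:ℤ)) from rfl]] <;>
  simp only [key h, NN] <;> norm_num <;>
  rcases hm with ⟨rfl,rfl,rfl,rfl⟩|⟨rfl,rfl,rfl,rfl⟩|⟨rfl,rfl,rfl,rfl⟩|⟨rfl,rfl,rfl,rfl⟩|⟨rfl,rfl,rfl,rfl⟩|⟨rfl,rfl,rfl,rfl⟩ <;>
  omega

/-- The three simple reflections of `W(Ã₂)` acting on the (rescaled) plane. -/
def ee (i : Fin 3) : Equiv.Perm P2 :=
  Function.Involutive.toPerm (ff i) (by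
    fin_cases i <;> rintro ⟨x,y⟩ <;> simp [ff, f0, f1, f2] <;> ring)

lemma ee_apply (i : Fin 3) (p : P2) : ee i p = ff i p := rfl

lemma liftable : (affineAMatrix 2).IsLiftable ee := by
  intro i j
  fin_cases i <;> fin_cases j <;>
    · refine Equiv.ext fun p => ?_
      obtain ⟨x, y⟩ := p
      simp (config := { decide := true }) [affineAMatrix, pow_succ, Equiv.Perm.mul_apply,
        ee_apply, ff, f0, f1, f2]
      try omega

section

open CoxeterSystem

variable {W : Type*} [Group W] (cs : CoxeterSystem (affineAMatrix 2) W)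

/-- The representation of `W(Ã₂)` as permutations of the plane. -/
noncomputable def phi : W →* Equiv.Perm P2 := cs.lift ⟨ee, liftable⟩

lemma phi_simple (i : Fin 3) : phi cs (cs.simple i) = ee i :=
  cs.lift_apply_simple liftable i

lemma bound (ω : List (Fin 3)) :
    Good (fun p => phi cs (cs.wordProd ω) p) ∧
      NN (phi cs (cs.wordProd ω) ((1:ℤ),(1:ℤ))) ≤ ω.length := by
  induction ω using List.reverseRecOn with
  | nil =>
    constructor
    · have e : (fun p => phi cs (cs.wordProd []) p) = id := by
        funext p; rw [cs.wordProd_nil, map_one]; rfl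
      rw [e]; exact good_id
    · rw [cs.wordProd_nil, map_one]
      show NN ((1:ℤ),(1:ℤ)) ≤ 0
      decide
  | append_singleton ω i ih =>
    have hfun : ∀ p, phi cs (cs.wordProd (ω ++ [i])) p = phi cs (cs.wordProd ω) (ff i p) := by
      intro p
      rw [cs.wordProd_append, map_mul, cs.wordProd_singleton, phi_simple]
      rfl
    constructor
    · have e : (fun p => phi cs (cs.wordProd (ω ++ [i])) p)
          = (fun p => phi cs (cs.wordProd ω) (ff i p)) := funext hfun
      rw [e]; exact good_step ih.1 i
    · rw [hfun]
      have h1 : NN (phi cs (cs.wordProd ω) (ff i ((1:ℤ),(1:ℤ))))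
          ≤ NN (phi cs (cs.wordProd ω) ((1:ℤ),(1:ℤ))) + 1 := NN_step ih.1 i
      have h2 := ih.2
      simp only [List.length_append, List.length_singleton]
      omega

lemma len_bound (w : W) : NN (phi cs w ((1:ℤ),(1:ℤ))) ≤ cs.length w := by
  obtain ⟨ω, hl, rfl⟩ := cs.exists_reduced_word w
  rw [show cs.length (cs.wordProd ω) = ω.length from hl]
  exact (bound cs ω).2

end

def letter (j : ℕ) : Fin 3 := if j % 3 = 0 then 1 else if j % 3 = 1 then 0 else 2

def pre : ℕ → List (Fin 3)
  | 0 => []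
  | (j+1) => pre j ++ [letter j]

lemma pre_length (j : ℕ) : (pre j).length = j := by
  induction j with
  | zero => rfl
  | succ j ih => simp [pre, ih]

def G : ℕ → P2 → P2
  | 0 => id
  | (j+1) => fun p => G j (ff (letter j) p)

def CF (j : ℕ) (p : P2) : P2 :=
  if j % 6 = 0 then (p.1, p.2 - 9*((j/6 : ℕ) : ℤ))
  else if j % 6 = 1 then (p.1+p.2, -p.2-9*((j/6 : ℕ) : ℤ))
  else if j % 6 = 2 then (p.2, -p.1-p.2-9*((j/6 : ℕ) : ℤ))
  else if j % 6 = 3 then (3-p.1, p.1+p.2-6-9*((j/6 : ℕ) : ℤ))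
  else if j % 6 = 4 then (3-p.1-p.2, p.1-6-9*((j/6 : ℕ) : ℤ))
  else (3-p.2, -p.1-6-9*((j/6 : ℕ) : ℤ))

section

open CoxeterSystem

variable {W : Type*} [Group W] (cs : CoxeterSystem (affineAMatrix 2) W)

lemma phi_pre (j : ℕ) : ∀ p, phi cs (cs.wordProd (pre j)) p = G j p := by
  induction j with
  | zero =>
    intro p
    show phi cs (cs.wordProd []) p = p
    rw [cs.wordProd_nil, map_one]; rfl
  | succ j ih =>
    intro p
    show phi cs (cs.wordProd (pre j ++ [letter j])) p = G j (ff (letter j) p)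
    rw [cs.wordProd_append, map_mul, cs.wordProd_singleton, phi_simple]
    exact ih _

end

lemma G_eq_CF (j : ℕ) : ∀ p, G j p = CF j p := by
  induction j with
  | zero =>
    intro p
    show p = CF 0 p
    simp [CF]
  | succ j ih =>
    intro p
    obtain ⟨x, y⟩ := p
    have h6 : j % 6 = 0 ∨ j % 6 = 1 ∨ j % 6 = 2 ∨ j % 6 = 3 ∨ j % 6 = 4 ∨ j % 6 = 5 := by omega
    show G j (ff (letter j) (x,y)) = CF (j+1) (x,y)
    rcases h6 with h|h|h|h|h|h
    · have hL : letter j = 1 := by unfold letter; rw [show j % 3 = 0 from by omega]; norm_num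
      rw [hL, ff1, show f1 (x,y) = (x+y, -y) from rfl, ih]
      have e1 : (j+1) % 6 = 1 := by omega
      have e2 : (j+1) / 6 = j / 6 := by omega
      simp only [CF, h, e1, e2]
      norm_num [Prod.mk.injEq]
      try omega
    · have hL : letter j = 0 := by unfold letter; rw [show j % 3 = 1 from by omega]; norm_num
      rw [hL, ff0, show f0 (x,y) = (-x, x+y) from rfl, ih]
      have e1 : (j+1) % 6 = 2 := by omega
      have e2 : (j+1) / 6 = j / 6 := by omega
      simp only [CF, h, e1, e2]
      norm_num [Prod.mk.injEq]
      try omega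
    · have hL : letter j = 2 := by unfold letter; rw [show j % 3 = 2 from by omega]; norm_num
      rw [hL, ff2, show f2 (x,y) = (3-y, 3-x) from rfl, ih]
      have e1 : (j+1) % 6 = 3 := by omega
      have e2 : (j+1) / 6 = j / 6 := by omega
      simp only [CF, h, e1, e2]
      norm_num [Prod.mk.injEq]
      try omega
    · have hL : letter j = 1 := by unfold letter; rw [show j % 3 = 0 from by omega]; norm_num
      rw [hL, ff1, show f1 (x,y) = (x+y, -y) from rfl, ih]
      have e1 : (j+1) % 6 = 4 := by omega
      have e2 : (j+1) / 6 = j / 6 := by omega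
      simp only [CF, h, e1, e2]
      norm_num [Prod.mk.injEq]
      try omega
    · have hL : letter j = 0 := by unfold letter; rw [show j % 3 = 1 from by omega]; norm_num
      rw [hL, ff0, show f0 (x,y) = (-x, x+y) from rfl, ih]
      have e1 : (j+1) % 6 = 5 := by omega
      have e2 : (j+1) / 6 = j / 6 := by omega
      simp only [CF, h, e1, e2]
      norm_num [Prod.mk.injEq]
      try omega
    · have hL : letter j = 2 := by unfold letter; rw [show j % 3 = 2 from by omega]; norm_num
      rw [hL, ff2, show f2 (x,y) = (3-y, 3-x) from rfl, ih]
      have e1 : (j+1) % 6 = 0 := by omega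
      have e2 : ((j+1) / 6 : ℕ) = j / 6 + 1 := by omega
      simp only [CF, h, e1, e2]
      norm_num [Prod.mk.injEq]
      try omega

lemma fact1 (j : ℕ) : NN (CF j ((1:ℤ),(1:ℤ))) = j := by
  have h6 : j % 6 = 0 ∨ j % 6 = 1 ∨ j % 6 = 2 ∨ j % 6 = 3 ∨ j % 6 = 4 ∨ j % 6 = 5 := by omega
  rcases h6 with h|h|h|h|h|h <;> simp only [CF, h] <;> norm_num [NN] <;> omega

set_option maxHeartbeats 1000000 in
lemma fact2 (j : ℕ) (i : Fin 3) (h1 : 1 ≤ j) (hne : i ≠ letter (j-1)) :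
    j ≤ NN (CF j (ff i ((1:ℤ),(1:ℤ)))) := by
  have hi : i = 0 ∨ i = 1 ∨ i = 2 := by fin_cases i <;> decide
  have h6 : j % 6 = 0 ∨ j % 6 = 1 ∨ j % 6 = 2 ∨ j % 6 = 3 ∨ j % 6 = 4 ∨ j % 6 = 5 := by omega
  rcases h6 with h|h|h|h|h|h
  · have hL : letter (j-1) = 2 := by
      unfold letter; rw [show (j-1) % 3 = 2 from by omega]; norm_num
    rw [hL] at hne
    rcases hi with rfl|rfl|rfl
    · rw [ff0, show f0 ((1:ℤ),(1:ℤ)) = ((-1:ℤ),(2:ℤ)) from rfl]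
      simp only [CF, h]; norm_num [NN]; omega
    · rw [ff1, show f1 ((1:ℤ),(1:ℤ)) = ((2:ℤ),(-1:ℤ)) from rfl]
      simp only [CF, h]; norm_num [NN]; omega
    · exact absurd rfl hne
  · have hL : letter (j-1) = 1 := by
      unfold letter; rw [show (j-1) % 3 = 0 from by omega]; norm_num
    rw [hL] at hne
    rcases hi with rfl|rfl|rfl
    · rw [ff0, show f0 ((1:ℤ),(1:ℤ)) = ((-1:ℤ),(2:ℤ)) from rfl]
      simp only [CF, h]; norm_num [NN]; omega
    · exact absurd rfl hne
    · rw [ff2, show f2 ((1:ℤ),(1:ℤ)) = ((2:ℤ),(2:ℤ)) from rfl]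
      simp only [CF, h]; norm_num [NN]; omega
  · have hL : letter (j-1) = 0 := by
      unfold letter; rw [show (j-1) % 3 = 1 from by omega]; norm_num
    rw [hL] at hne
    rcases hi with rfl|rfl|rfl
    · exact absurd rfl hne
    · rw [ff1, show f1 ((1:ℤ),(1:ℤ)) = ((2:ℤ),(-1:ℤ)) from rfl]
      simp only [CF, h]; norm_num [NN]; omega
    · rw [ff2, show f2 ((1:ℤ),(1:ℤ)) = ((2:ℤ),(2:ℤ)) from rfl]
      simp only [CF, h]; norm_num [NN]; omega
  · have hL : letter (j-1) = 2 := by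
      unfold letter; rw [show (j-1) % 3 = 2 from by omega]; norm_num
    rw [hL] at hne
    rcases hi with rfl|rfl|rfl
    · rw [ff0, show f0 ((1:ℤ),(1:ℤ)) = ((-1:ℤ),(2:ℤ)) from rfl]
      simp only [CF, h]; norm_num [NN]; omega
    · rw [ff1, show f1 ((1:ℤ),(1:ℤ)) = ((2:ℤ),(-1:ℤ)) from rfl]
      simp only [CF, h]; norm_num [NN]; omega
    · exact absurd rfl hne
  · have hL : letter (j-1) = 1 := by
      unfold letter; rw [show (j-1) % 3 = 0 from by omega]; norm_num
    rw [hL] at hne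
    rcases hi with rfl|rfl|rfl
    · rw [ff0, show f0 ((1:ℤ),(1:ℤ)) = ((-1:ℤ),(2:ℤ)) from rfl]
      simp only [CF, h]; norm_num [NN]; omega
    · exact absurd rfl hne
    · rw [ff2, show f2 ((1:ℤ),(1:ℤ)) = ((2:ℤ),(2:ℤ)) from rfl]
      simp only [CF, h]; norm_num [NN]; omega
  · have hL : letter (j-1) = 0 := by
      unfold letter; rw [show (j-1) % 3 = 1 from by omega]; norm_num
    rw [hL] at hne
    rcases hi with rfl|rfl|rfl
    · exact absurd rfl hne
    · rw [ff1, show f1 ((1:ℤ),(1:ℤ)) = ((2:ℤ),(-1:ℤ)) from rfl]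
      simp only [CF, h]; norm_num [NN]; omega
    · rw [ff2, show f2 ((1:ℤ),(1:ℤ)) = ((2:ℤ),(2:ℤ)) from rfl]
      simp only [CF, h]; norm_num [NN]; omega

section

open CoxeterSystem

variable {W : Type*} [Group W] (cs : CoxeterSystem (affineAMatrix 2) W)

lemma red_pre (j : ℕ) : cs.IsReduced (pre j) := by
  have hub := cs.length_wordProd_le (pre j)
  have hlb := len_bound cs (cs.wordProd (pre j))
  rw [phi_pre cs j, G_eq_CF j, fact1 j] at hlb
  rw [pre_length] at hub
  unfold CoxeterSystem.IsReduced
  rw [pre_length]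
  omega

lemma uniq (j : ℕ) : ∀ ω' : List (Fin 3),
    cs.wordProd ω' = cs.wordProd (pre j) → cs.IsReduced ω' → ω' = pre j := by
  induction j with
  | zero =>
    intro ω' hp hr
    unfold CoxeterSystem.IsReduced at hr
    rw [hp] at hr
    have : cs.wordProd (pre 0) = 1 := by show cs.wordProd [] = 1; exact cs.wordProd_nil
    rw [this, cs.length_one] at hr
    exact List.eq_nil_of_length_eq_zero hr.symm
  | succ j ih =>
    intro ω' hp hr
    have hredpre := red_pre cs (j+1)
    unfold CoxeterSystem.IsReduced at hredpre hr
    rw [pre_length] at hredpre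
    have hlen : ω'.length = j + 1 := by rw [← hr, hp, hredpre]
    rcases List.eq_nil_or_concat ω' with rfl | ⟨ω'', i', rfl⟩
    · simp at hlen
    rw [List.concat_eq_append] at hp hr hlen ⊢
    have hlen'' : ω''.length = j := by simpa using hlen
    have hπ'' : cs.wordProd ω'' = cs.wordProd (pre (j+1)) * cs.simple i' := by
      rw [← hp, cs.wordProd_append, cs.wordProd_singleton]
      simp
    have hle : cs.length (cs.wordProd (pre (j+1)) * cs.simple i') ≤ j := by
      rw [← hπ'']
      have := cs.length_wordProd_le ω''
      omega
    have hi' : i' = letter j := by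
      by_contra hne
      have h2 : phi cs (cs.wordProd (pre (j+1)) * cs.simple i') ((1:ℤ),(1:ℤ))
          = CF (j+1) (ff i' ((1:ℤ),(1:ℤ))) := by
        rw [map_mul, phi_simple]
        rw [Equiv.Perm.mul_apply]
        rw [ee_apply]
        rw [phi_pre cs (j+1), G_eq_CF]
      have h3 := len_bound cs (cs.wordProd (pre (j+1)) * cs.simple i')
      rw [h2] at h3
      have h4 := fact2 (j+1) i' (by omega) (by simpa using hne)
      omega
    subst hi'
    have hπ2 : cs.wordProd ω'' = cs.wordProd (pre j) := by
      rw [hπ'']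
      show cs.wordProd (pre j ++ [letter j]) * cs.simple (letter j) = cs.wordProd (pre j)
      rw [cs.wordProd_append, cs.wordProd_singleton]
      simp
    have hr'' : cs.IsReduced ω'' := by
      unfold CoxeterSystem.IsReduced
      rw [hπ2, hlen'']
      have := red_pre cs j
      unfold CoxeterSystem.IsReduced at this
      rw [pre_length] at this
      exact this
    rw [ih ω'' hπ2 hr'']
    rfl

end

lemma flatten_eq_pre (k : ℕ) :
    (List.replicate k ([1, 0, 2] : List (Fin 3))).flatten = pre (3*k) := by
  induction k with
  | zero => rfl
  | succ k ih =>
    rw [List.replicate_succ', List.flatten_append, ih]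
    have hL0 : letter (3*k) = 1 := by
      unfold letter; rw [show (3*k) % 3 = 0 from by omega]; norm_num
    have hL1 : letter (3*k+1) = 0 := by
      unfold letter; rw [show (3*k+1) % 3 = 1 from by omega]; norm_num
    have hL2 : letter (3*k+1+1) = 2 := by
      unfold letter; rw [show (3*k+1+1) % 3 = 2 from by omega]; norm_num
    have e1 : 3*(k+1) = ((3*k+1)+1)+1 := by ring
    rw [e1]
    show _ = ((pre (3*k) ++ [letter (3*k)]) ++ [letter (3*k+1)]) ++ [letter (3*k+1+1)]
    rw [hL0, hL1, hL2]
    simp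

lemma word_eq_pre (k : ℕ) :
    (List.replicate k ([1, 0, 2] : List (Fin 3))).flatten ++ [1, 0] = pre (3*k+2) := by
  rw [flatten_eq_pre]
  have hL0 : letter (3*k) = 1 := by
    unfold letter; rw [show (3*k) % 3 = 0 from by omega]; norm_num
  have hL1 : letter (3*k+1) = 0 := by
    unfold letter; rw [show (3*k+1) % 3 = 1 from by omega]; norm_num
  show _ = (pre (3*k) ++ [letter (3*k)]) ++ [letter (3*k+1)]
  rw [hL0, hL1]
  simp

end AffA2Aux

/-- In `W(Ã₂)`, for every `k ≥ 0` the word `(σ₂σ₁a₃)^k σ₂σ₁` (indices `[1,0,2]` repeated,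
then `[1,0]`) is reduced and the element it represents is fully commutative. -/
theorem reduced_fc_power_word {W : Type*} [Group W]
    (cs : CoxeterSystem (affineAMatrix 2) W) (k : ℕ) :
    cs.IsReduced ((List.replicate k ([1, 0, 2] : List (Fin 3))).flatten ++ [1, 0]) ∧
    IsFC cs (cs.wordProd ((List.replicate k ([1, 0, 2] : List (Fin 3))).flatten ++ [1, 0])) := by
  have hw := AffA2Aux.word_eq_pre k
  rw [hw]
  refine ⟨AffA2Aux.red_pre cs _, ?_⟩
  intro ω₁ ω₂ h₁ h₂
  obtain ⟨hp1, hr1⟩ := h₁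
  obtain ⟨hp2, hr2⟩ := h₂
  rw [AffA2Aux.uniq cs _ ω₁ hp1 hr1, AffA2Aux.uniq cs _ ω₂ hp2 hr2]
  exact Relation.ReflTransGen.refl
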